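/- Let X be a Banach space, A, A₀ closed invertible operators with the same domain, and suppose (i) ‖e^{−σA}‖_{L(X, D(A))} ≤ M₀ σ^{−1} e^{−ωσ} for σ > 0 (where D(A) carries the graph norm), (ii) ‖(A − A₀)x‖_X ≤ η‖x‖_{D(A₀)} with η ≥ 0, and (iii) A e^{−σA} − A e^{−σA₀} decomposes as A e^{−σ/2·A}(e^{−σ/2·A} − e^{−σ/2·A₀}) + e^{−σ/2·A}(A − A₀)e^{−σ/2·A₀} + (e^{−σ/2·A} − e^{−σ/2·A₀})A₀e^{−σ/2·A₀} + (A₀ − A)e^{−σA₀}. Then ‖e^{−σA} − e^{−σA₀}‖_{L(X, D(A))} is controlled by ‖e^{−σ/2 A} − e^{−σ/2 A₀}‖_{L(X)}, η, and the smoothing constants; in particular if ‖e^{−sA_ε} − e^{−sA₀}‖_{L(X)} → 0 uniformly on compacts and ‖(A_ε − A₀)A₀⁻¹‖ → 0 as ε → 0⁺, then ‖e^{−σA_ε} − e^{−σA₀}‖_{L(X, D(A₀))} → 0 for each σ > 0. -/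

import Mathlib

open Filter

/-- Abstract version of Lemma 5.2: `X` is the base Banach space, `D` the common domain
(with graph norm, so `‖x‖_D` is controlled by `‖ιx‖ + ‖A₀x‖`), `ι : D → X` the embedding,
`A ε : D → X` the (bounded from the domain) operators `A_ε`, `S ε σ = e^{-σA_ε}` in
`L(X)` and `T ε σ = e^{-σA_ε}` viewed in `L(X, D)`.  Assume:
(i) the uniform smoothing estimate `‖e^{-σA_ε}‖_{L(X,D)} ≤ M₀ σ^{-1} e^{-ωσ}`;
(iii) the algebraic decomposition of `A_ε e^{-σA_ε} - A_ε e^{-σA₀}`.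
Then, if `‖e^{-sA_ε} - e^{-sA₀}‖_{L(X)} → 0` uniformly on compact subsets of `(0,∞)` and
`‖(A_ε - A₀)A₀⁻¹‖ → 0` (encoded as `‖A_ε - A₀‖_{L(D,X)} → 0`) as `ε → 0⁺`, then
`‖e^{-σA_ε} - e^{-σA₀}‖_{L(X,D)} → 0` for each `σ > 0`. -/
theorem stmt14 {X D : Type*} [NormedAddCommGroup X] [NormedSpace ℝ X] [CompleteSpace X]
    [NormedAddCommGroup D] [NormedSpace ℝ D] [CompleteSpace D]
    (ι : D →L[ℝ] X)
    (A : ℝ → (D →L[ℝ] X))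
    (S : ℝ → ℝ → (X →L[ℝ] X))
    (T : ℝ → ℝ → (X →L[ℝ] D))
    (M₀ ω : ℝ) (hM₀ : 0 < M₀) (hω : 0 < ω)
    (hιT : ∀ ε σ, 0 < σ → ι.comp (T ε σ) = S ε σ)
    (hsmooth : ∀ ε σ, 0 < σ → ‖T ε σ‖ ≤ M₀ / σ * Real.exp (-ω * σ))
    (hgraph : ∀ x : D, ‖x‖ ≤ ‖ι x‖ + ‖A 0 x‖)
    (hdecomp : ∀ ε σ, 0 < σ →
      (A ε).comp (T ε σ) - (A ε).comp (T 0 σ) =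
        ((A ε).comp (T ε (σ / 2))).comp (S ε (σ / 2) - S 0 (σ / 2))
          + (S ε (σ / 2)).comp ((A ε - A 0).comp (T 0 (σ / 2)))
          + (S ε (σ / 2) - S 0 (σ / 2)).comp ((A 0).comp (T 0 (σ / 2)))
          + (A 0 - A ε).comp (T 0 σ))
    (hSconv : ∀ K : Set ℝ, IsCompact K → K ⊆ Set.Ioi (0 : ℝ) →
      TendstoUniformlyOn (fun ε σ => S ε σ) (fun σ => S 0 σ)
        (nhdsWithin 0 (Set.Ioi (0 : ℝ))) K)
    (hAconv : Tendsto (fun ε => ‖A ε - A 0‖)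
      (nhdsWithin 0 (Set.Ioi (0 : ℝ))) (nhds 0)) :
    ∀ σ : ℝ, 0 < σ →
      Tendsto (fun ε => ‖T ε σ - T 0 σ‖)
        (nhdsWithin 0 (Set.Ioi (0 : ℝ))) (nhds 0) := by
  intro σ hσ
  have hσ2 : 0 < σ / 2 := by linarith
  set l := nhdsWithin (0 : ℝ) (Set.Ioi (0 : ℝ)) with hl
  set C : ℝ := M₀ / (σ / 2) * Real.exp (-ω * (σ / 2)) with hCdef
  set Cσ : ℝ := M₀ / σ * Real.exp (-ω * σ) with hCσdef
  have hCnn : 0 ≤ C := by positivity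
  have hCσnn : 0 ≤ Cσ := by positivity
  -- convergence of the three scalar quantities
  have hSpt : ∀ s : ℝ, 0 < s →
      Tendsto (fun ε => ‖S ε s - S 0 s‖) l (nhds 0) := by
    intro s hs
    have h := hSconv {s} isCompact_singleton (by simpa using hs)
    rw [tendstoUniformlyOn_singleton_iff_tendsto] at h
    exact tendsto_iff_norm_sub_tendsto_zero.mp h
  have ha := hSpt σ hσ
  have hc := hSpt (σ / 2) hσ2
  have hb := hAconv
  -- the key pointwise bound
  have key : ∀ ε : ℝ, ‖T ε σ - T 0 σ‖ ≤
      ‖S ε σ - S 0 σ‖ +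
        (‖A ε - A 0‖ * Cσ +
          (((‖A ε - A 0‖ + ‖A 0‖) * C) * ‖S ε (σ / 2) - S 0 (σ / 2)‖ +
            (‖ι‖ * C) * (‖A ε - A 0‖ * C) +
            ‖S ε (σ / 2) - S 0 (σ / 2)‖ * (‖A 0‖ * C) +
            ‖A ε - A 0‖ * Cσ) +
          ‖A ε - A 0‖ * Cσ) := by
    intro ε
    have hT : ‖T ε (σ / 2)‖ ≤ C := hsmooth ε _ hσ2
    have hT0 : ‖T 0 (σ / 2)‖ ≤ C := hsmooth 0 _ hσ2
    have hTσ : ‖T ε σ‖ ≤ Cσ := hsmooth ε σ hσ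
    have hT0σ : ‖T 0 σ‖ ≤ Cσ := hsmooth 0 σ hσ
    have hAε : ‖A ε‖ ≤ ‖A ε - A 0‖ + ‖A 0‖ := by
      calc ‖A ε‖ = ‖A ε - A 0 + A 0‖ := by rw [sub_add_cancel]
        _ ≤ ‖A ε - A 0‖ + ‖A 0‖ := norm_add_le _ _
    have hSε : ‖S ε (σ / 2)‖ ≤ ‖ι‖ * C := by
      calc ‖S ε (σ / 2)‖ = ‖ι.comp (T ε (σ / 2))‖ := by rw [hιT ε _ hσ2]
        _ ≤ ‖ι‖ * ‖T ε (σ / 2)‖ := ContinuousLinearMap.opNorm_comp_le _ _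
        _ ≤ ‖ι‖ * C := by gcongr
    -- bound on the A₀-part
    have hid : (A 0).comp (T ε σ) - (A 0).comp (T 0 σ) =
        (A 0 - A ε).comp (T ε σ) +
          ((A ε).comp (T ε σ) - (A ε).comp (T 0 σ)) +
          (A ε - A 0).comp (T 0 σ) := by
      simp only [ContinuousLinearMap.sub_comp]
      abel
    have hD : ‖(A 0).comp (T ε σ) - (A 0).comp (T 0 σ)‖ ≤
        ‖A ε - A 0‖ * Cσ +
          (((‖A ε - A 0‖ + ‖A 0‖) * C) * ‖S ε (σ / 2) - S 0 (σ / 2)‖ +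
            (‖ι‖ * C) * (‖A ε - A 0‖ * C) +
            ‖S ε (σ / 2) - S 0 (σ / 2)‖ * (‖A 0‖ * C) +
            ‖A ε - A 0‖ * Cσ) +
          ‖A ε - A 0‖ * Cσ := by
      have n1 : ‖(A 0 - A ε).comp (T ε σ)‖ ≤ ‖A ε - A 0‖ * Cσ := by
        calc ‖(A 0 - A ε).comp (T ε σ)‖ ≤ ‖A 0 - A ε‖ * ‖T ε σ‖ :=
            ContinuousLinearMap.opNorm_comp_le _ _
          _ ≤ ‖A ε - A 0‖ * Cσ := by rw [norm_sub_rev]; gcongr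
      have nAT : ‖(A ε).comp (T ε (σ / 2))‖ ≤ (‖A ε - A 0‖ + ‖A 0‖) * C := by
        calc ‖(A ε).comp (T ε (σ / 2))‖ ≤ ‖A ε‖ * ‖T ε (σ / 2)‖ :=
            ContinuousLinearMap.opNorm_comp_le _ _
          _ ≤ (‖A ε - A 0‖ + ‖A 0‖) * C := by
            have : (0:ℝ) ≤ ‖A 0‖ := norm_nonneg _
            have h' : (0:ℝ) ≤ ‖A ε‖ := norm_nonneg _
            nlinarith [hAε, hT, norm_nonneg (T ε (σ / 2))]
      have n2 : ‖((A ε).comp (T ε (σ / 2))).comp (S ε (σ / 2) - S 0 (σ / 2))‖ ≤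
          ((‖A ε - A 0‖ + ‖A 0‖) * C) * ‖S ε (σ / 2) - S 0 (σ / 2)‖ := by
        calc ‖((A ε).comp (T ε (σ / 2))).comp (S ε (σ / 2) - S 0 (σ / 2))‖
            ≤ ‖(A ε).comp (T ε (σ / 2))‖ * ‖S ε (σ / 2) - S 0 (σ / 2)‖ :=
              ContinuousLinearMap.opNorm_comp_le _ _
          _ ≤ _ := by gcongr
      have nAT0 : ‖(A ε - A 0).comp (T 0 (σ / 2))‖ ≤ ‖A ε - A 0‖ * C := by
        calc ‖(A ε - A 0).comp (T 0 (σ / 2))‖ ≤ ‖A ε - A 0‖ * ‖T 0 (σ / 2)‖ :=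
            ContinuousLinearMap.opNorm_comp_le _ _
          _ ≤ _ := by gcongr
      have n3 : ‖(S ε (σ / 2)).comp ((A ε - A 0).comp (T 0 (σ / 2)))‖ ≤
          (‖ι‖ * C) * (‖A ε - A 0‖ * C) := by
        calc ‖(S ε (σ / 2)).comp ((A ε - A 0).comp (T 0 (σ / 2)))‖
            ≤ ‖S ε (σ / 2)‖ * ‖(A ε - A 0).comp (T 0 (σ / 2))‖ :=
              ContinuousLinearMap.opNorm_comp_le _ _
          _ ≤ _ := by gcongr
      have nA0T0 : ‖(A 0).comp (T 0 (σ / 2))‖ ≤ ‖A 0‖ * C := by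
        calc ‖(A 0).comp (T 0 (σ / 2))‖ ≤ ‖A 0‖ * ‖T 0 (σ / 2)‖ :=
            ContinuousLinearMap.opNorm_comp_le _ _
          _ ≤ _ := by gcongr
      have n4 : ‖(S ε (σ / 2) - S 0 (σ / 2)).comp ((A 0).comp (T 0 (σ / 2)))‖ ≤
          ‖S ε (σ / 2) - S 0 (σ / 2)‖ * (‖A 0‖ * C) := by
        calc ‖(S ε (σ / 2) - S 0 (σ / 2)).comp ((A 0).comp (T 0 (σ / 2)))‖
            ≤ ‖S ε (σ / 2) - S 0 (σ / 2)‖ * ‖(A 0).comp (T 0 (σ / 2))‖ :=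
              ContinuousLinearMap.opNorm_comp_le _ _
          _ ≤ _ := by gcongr
      have n5 : ‖(A 0 - A ε).comp (T 0 σ)‖ ≤ ‖A ε - A 0‖ * Cσ := by
        calc ‖(A 0 - A ε).comp (T 0 σ)‖ ≤ ‖A 0 - A ε‖ * ‖T 0 σ‖ :=
            ContinuousLinearMap.opNorm_comp_le _ _
          _ ≤ ‖A ε - A 0‖ * Cσ := by rw [norm_sub_rev]; gcongr
      have n6 : ‖(A ε - A 0).comp (T 0 σ)‖ ≤ ‖A ε - A 0‖ * Cσ := by
        calc ‖(A ε - A 0).comp (T 0 σ)‖ ≤ ‖A ε - A 0‖ * ‖T 0 σ‖ :=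
            ContinuousLinearMap.opNorm_comp_le _ _
          _ ≤ _ := by gcongr
      rw [hid, hdecomp ε σ hσ]
      have nm : ‖((A ε).comp (T ε (σ / 2))).comp (S ε (σ / 2) - S 0 (σ / 2))
            + (S ε (σ / 2)).comp ((A ε - A 0).comp (T 0 (σ / 2)))
            + (S ε (σ / 2) - S 0 (σ / 2)).comp ((A 0).comp (T 0 (σ / 2)))
            + (A 0 - A ε).comp (T 0 σ)‖ ≤
          ‖((A ε).comp (T ε (σ / 2))).comp (S ε (σ / 2) - S 0 (σ / 2))‖
            + ‖(S ε (σ / 2)).comp ((A ε - A 0).comp (T 0 (σ / 2)))‖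
            + ‖(S ε (σ / 2) - S 0 (σ / 2)).comp ((A 0).comp (T 0 (σ / 2)))‖
            + ‖(A 0 - A ε).comp (T 0 σ)‖ :=
        (norm_add_le _ _).trans (add_le_add norm_add₃_le le_rfl)
      refine norm_add₃_le.trans ?_
      linarith [nm, n1, n2, n3, n4, n5, n6]
    -- combine via the graph norm
    refine ContinuousLinearMap.opNorm_le_bound _ ?_ fun x => ?_
    · have h1 : (0:ℝ) ≤ ‖S ε σ - S 0 σ‖ := norm_nonneg _
      have h2 : (0:ℝ) ≤ ‖(A 0).comp (T ε σ) - (A 0).comp (T 0 σ)‖ := norm_nonneg _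
      nlinarith [hD, norm_nonneg (A ε - A 0), norm_nonneg (A 0), norm_nonneg ι,
        norm_nonneg (S ε (σ/2) - S 0 (σ/2))]
    · have e1 : ι ((T ε σ) x) = (S ε σ) x := by
        rw [← hιT ε σ hσ]; rfl
      have e2 : ι ((T 0 σ) x) = (S 0 σ) x := by
        rw [← hιT 0 σ hσ]; rfl
      calc ‖(T ε σ - T 0 σ) x‖ = ‖(T ε σ) x - (T 0 σ) x‖ := by simp
        _ ≤ ‖ι ((T ε σ) x - (T 0 σ) x)‖ + ‖A 0 ((T ε σ) x - (T 0 σ) x)‖ := hgraph _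
        _ = ‖(S ε σ - S 0 σ) x‖ + ‖((A 0).comp (T ε σ) - (A 0).comp (T 0 σ)) x‖ := by
            simp [map_sub, e1, e2]
        _ ≤ ‖S ε σ - S 0 σ‖ * ‖x‖ +
              ‖(A 0).comp (T ε σ) - (A 0).comp (T 0 σ)‖ * ‖x‖ := by
            gcongr <;> exact ContinuousLinearMap.le_opNorm _ _
        _ ≤ ‖S ε σ - S 0 σ‖ * ‖x‖ +
              (‖A ε - A 0‖ * Cσ +
                (((‖A ε - A 0‖ + ‖A 0‖) * C) * ‖S ε (σ / 2) - S 0 (σ / 2)‖ +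
                  (‖ι‖ * C) * (‖A ε - A 0‖ * C) +
                  ‖S ε (σ / 2) - S 0 (σ / 2)‖ * (‖A 0‖ * C) +
                  ‖A ε - A 0‖ * Cσ) +
                ‖A ε - A 0‖ * Cσ) * ‖x‖ := by
            gcongr
        _ = _ := by ring
  -- conclude by squeezing
  have hg : Tendsto (fun ε =>
      ‖S ε σ - S 0 σ‖ +
        (‖A ε - A 0‖ * Cσ +
          (((‖A ε - A 0‖ + ‖A 0‖) * C) * ‖S ε (σ / 2) - S 0 (σ / 2)‖ +
            (‖ι‖ * C) * (‖A ε - A 0‖ * C) +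
            ‖S ε (σ / 2) - S 0 (σ / 2)‖ * (‖A 0‖ * C) +
            ‖A ε - A 0‖ * Cσ) +
          ‖A ε - A 0‖ * Cσ)) l
      (nhds (0 + (0 * Cσ + (((0 + ‖A 0‖) * C) * 0 + (‖ι‖ * C) * (0 * C) +
        0 * (‖A 0‖ * C) + 0 * Cσ) + 0 * Cσ))) := by
    refine ha.add (((hb.mul_const Cσ).add ?_).add (hb.mul_const Cσ))
    refine ((((((hb.add tendsto_const_nhds).mul_const C).mul hc).add
      (tendsto_const_nhds.mul (hb.mul_const C))).add
      (hc.mul_const (‖A 0‖ * C))).add (hb.mul_const Cσ))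
  simp only [zero_mul, mul_zero, add_zero, zero_add] at hg
  exact squeeze_zero (fun ε => norm_nonneg _) key hg
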